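/- Let H₀ < 0 and γ > 0. The equation √γ · v = (2√2/3) · H₀ · (v+1)^{3/2} has exactly one solution v with -1 < v < 0. -/
import Mathlib


open Real

theorem takeoff_equation_negative_H (H₀ γ : ℝ) (hH : H₀ < 0) (hγ : 0 < γ) :
    ∃! v : ℝ, -1 < v ∧ v < 0 ∧
      Real.sqrt γ * v = (2 * Real.sqrt 2 / 3) * H₀ * (v + 1) ^ ((3 : ℝ) / 2) := by
  set c : ℝ := 2 * Real.sqrt 2 / 3 * H₀ with hc
  have hs2 : 0 < Real.sqrt 2 := Real.sqrt_pos.mpr (by norm_num)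
  have hcneg : c < 0 := mul_neg_of_pos_of_neg (by positivity) hH
  have hsγ : 0 < Real.sqrt γ := Real.sqrt_pos.mpr hγ
  set g : ℝ → ℝ := fun v => Real.sqrt γ * v - c * (v + 1) ^ ((3:ℝ)/2) with hg
  have hcont : Continuous g := by
    apply Continuous.sub (continuous_const.mul continuous_id)
    exact continuous_const.mul
      ((continuous_id.add continuous_const).rpow_const (fun x => Or.inr (by norm_num)))
  have hmono : StrictMonoOn g (Set.Ici (-1 : ℝ)) := by
    intro a ha b hb hab
    simp only [Set.mem_Ici] at ha hb
    have h1 : Real.sqrt γ * a < Real.sqrt γ * b := by nlinarith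
    have h2 : (a+1)^((3:ℝ)/2) ≤ (b+1)^((3:ℝ)/2) :=
      Real.rpow_le_rpow (by linarith) (by linarith) (by norm_num)
    have h3 : c * (b+1)^((3:ℝ)/2) ≤ c * (a+1)^((3:ℝ)/2) := by nlinarith
    simp only [hg]
    linarith
  have hgm1 : g (-1) = -Real.sqrt γ := by
    simp [hg, Real.zero_rpow (by norm_num : (3:ℝ)/2 ≠ 0)]
  have hg0 : g 0 = -c := by
    simp [hg, Real.one_rpow]
  have h0mem : (0 : ℝ) ∈ Set.Ioo (g (-1)) (g 0) := by
    rw [hgm1, hg0]; constructor <;> linarith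
  obtain ⟨v, hvmem, hgv⟩ :=
    intermediate_value_Ioo (by norm_num : (-1:ℝ) ≤ 0) hcont.continuousOn h0mem
  refine ⟨v, ⟨hvmem.1, hvmem.2, ?_⟩, ?_⟩
  · have : Real.sqrt γ * v - c * (v + 1) ^ ((3:ℝ)/2) = 0 := hgv
    linarith
  · rintro w ⟨hw1, hw2, hw3⟩
    have hgw : g w = 0 := by simp only [hg]; linarith
    exact hmono.injOn (Set.mem_Ici.mpr (by linarith)) (Set.mem_Ici.mpr hvmem.1.le)
      (by rw [hgw, hgv])
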